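/- The total logarithmic scoring rule is strictly proper: for every N ≥ 2 and all probability mass vectors p ≠ q on Fin N, the prevision under p of p's own total logarithmic score strictly exceeds the prevision under p of q's total logarithmic score: ∑ x, p x * S(x,p) > ∑ x, p x * S(x,q). -/

import Mathlib

open Real Finset

/-- A probability mass vector: all components strictly between 0 and 1, summing to 1. -/
def IsPMV {N : ℕ} (p : Fin N → ℝ) : Prop :=
  (∀ i, 0 < p i ∧ p i < 1) ∧ ∑ i, p i = 1

/-- The total logarithmic score of the pmv `p` at outcome `x`. -/
noncomputable def S {N : ℕ} (x : Fin N) (p : Fin N → ℝ) : ℝ :=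
  Real.log (p x) + ∑ i ∈ Finset.univ.erase x, Real.log (1 - p i)

lemma gibbs_le (a b : ℝ) (ha : 0 < a) (ha1 : a < 1) (hb : 0 < b) (hb1 : b < 1) :
    a * Real.log b + (1 - a) * Real.log (1 - b)
      ≤ a * Real.log a + (1 - a) * Real.log (1 - a) := by
  have h1 : Real.log (b / a) ≤ b / a - 1 :=
    Real.log_le_sub_one_of_pos (div_pos hb ha)
  have h2 : Real.log ((1 - b) / (1 - a)) ≤ (1 - b) / (1 - a) - 1 :=
    Real.log_le_sub_one_of_pos (div_pos (by linarith) (by linarith))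
  rw [Real.log_div (ne_of_gt hb) (ne_of_gt ha)] at h1
  rw [Real.log_div (by linarith) (by linarith)] at h2
  have e1 : a * (b / a - 1) = b - a := by field_simp
  have e2 : (1 - a) * ((1 - b) / (1 - a) - 1) = a - b := by
    have h : (1:ℝ) - a ≠ 0 := by linarith
    field_simp
    ring
  nlinarith [mul_le_mul_of_nonneg_left h1 ha.le,
    mul_le_mul_of_nonneg_left h2 (by linarith : (0:ℝ) ≤ 1 - a)]

lemma gibbs_lt (a b : ℝ) (ha : 0 < a) (ha1 : a < 1) (hb : 0 < b) (hb1 : b < 1)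
    (hab : a ≠ b) :
    a * Real.log b + (1 - a) * Real.log (1 - b)
      < a * Real.log a + (1 - a) * Real.log (1 - a) := by
  have hba : b / a ≠ 1 := by
    intro h
    apply hab
    field_simp at h
    linarith
  have h1 : Real.log (b / a) < b / a - 1 :=
    Real.log_lt_sub_one_of_pos (div_pos hb ha) hba
  have h2 : Real.log ((1 - b) / (1 - a)) ≤ (1 - b) / (1 - a) - 1 :=
    Real.log_le_sub_one_of_pos (div_pos (by linarith) (by linarith))
  rw [Real.log_div (ne_of_gt hb) (ne_of_gt ha)] at h1
  rw [Real.log_div (by linarith) (by linarith)] at h2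
  have e1 : a * (b / a - 1) = b - a := by field_simp
  have e2 : (1 - a) * ((1 - b) / (1 - a) - 1) = a - b := by
    have h : (1:ℝ) - a ≠ 0 := by linarith
    field_simp
    ring
  nlinarith [mul_lt_mul_of_pos_left h1 ha,
    mul_le_mul_of_nonneg_left h2 (by linarith : (0:ℝ) ≤ 1 - a)]

lemma expected_score_eq {N : ℕ} (p q : Fin N → ℝ) (hp : IsPMV p) :
    ∑ x, p x * S x q
      = ∑ x, (p x * Real.log (q x) + (1 - p x) * Real.log (1 - q x)) := by
  have hsum : ∀ x : Fin N,
      ∑ i ∈ Finset.univ.erase x, Real.log (1 - q i)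
        = (∑ i, Real.log (1 - q i)) - Real.log (1 - q x) := by
    intro x
    rw [Finset.sum_erase_eq_sub (Finset.mem_univ x)]
  set T := ∑ i, Real.log (1 - q i) with hT
  have : ∀ x : Fin N, p x * S x q
      = p x * Real.log (q x) - p x * Real.log (1 - q x) + p x * T := by
    intro x
    rw [S, hsum x]; ring
  rw [Finset.sum_congr rfl fun x _ => this x]
  rw [Finset.sum_add_distrib, ← Finset.sum_mul, hp.2, one_mul, hT]
  rw [Finset.sum_sub_distrib]
  rw [Finset.sum_congr rfl
    (fun x _ => by ring :
      ∀ x ∈ Finset.univ, p x * Real.log (q x) + (1 - p x) * Real.log (1 - q x)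
        = (p x * Real.log (q x) - p x * Real.log (1 - q x)) + Real.log (1 - q x))]
  rw [Finset.sum_add_distrib, Finset.sum_sub_distrib]

theorem totalLogScore_strictly_proper {N : ℕ} (hN : 2 ≤ N)
    (p q : Fin N → ℝ) (hp : IsPMV p) (hq : IsPMV q) (hpq : p ≠ q) :
    ∑ x, p x * S x p > ∑ x, p x * S x q := by
  rw [expected_score_eq p p hp, expected_score_eq p q hp]
  obtain ⟨i, hi⟩ : ∃ i, p i ≠ q i := by
    by_contra h
    push_neg at h
    exact hpq (funext h)
  apply Finset.sum_lt_sum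
  · intro j _
    exact gibbs_le (p j) (q j) (hp.1 j).1 (hp.1 j).2 (hq.1 j).1 (hq.1 j).2
  · exact ⟨i, Finset.mem_univ i,
      gibbs_lt (p i) (q i) (hp.1 i).1 (hp.1 i).2 (hq.1 i).1 (hq.1 i).2 hi⟩
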